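/- arXiv:0905.4067 — 7 statements merged into one kernel-verified Lean document; each statement's English description precedes it below -/
import Mathlib

section
/- For bounded linear operators T, R, S on a complex Hilbert space H, one has T*RS + S*R*T ≤ ‖R‖(T*T + S*S) in the operator order. -/
open ContinuousLinearMap
open scoped InnerProductSpace

theorem stmt_1 {H : Type*} [NormedAddCommGroup H] [InnerProductSpace ℂ H]
    [CompleteSpace H] (T R S : H →L[ℂ] H) :
    adjoint T * R * S + adjoint S * adjoint R * T ≤
      ‖R‖ • (adjoint T * T + adjoint S * S) := by
  rw [ContinuousLinearMap.le_def]
  constructor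
  · rw [← ContinuousLinearMap.isSelfAdjoint_iff_isSymmetric]
    simp only [IsSelfAdjoint, star_sub, star_add, star_smul, star_mul, star_eq_adjoint,
      adjoint_adjoint, star_trivial, mul_assoc]
    abel
  · intro x
    rw [reApplyInnerSelf_apply]
    simp only [sub_apply, smul_apply, add_apply, mul_apply, inner_sub_left, inner_add_left,
      inner_smul_left, adjoint_inner_left, map_sub, map_add, ContinuousLinearMap.mul_apply]
    rw [RCLike.real_smul_eq_coe_smul (K := ℂ), inner_smul_left, inner_add_left, adjoint_inner_left, adjoint_inner_left,
      inner_re_symm (T x)]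
    have hT : RCLike.re (⟪T x, T x⟫_ℂ) = ‖T x‖ ^ 2 := inner_self_eq_norm_sq _
    have hS : RCLike.re (⟪S x, S x⟫_ℂ) = ‖S x‖ ^ 2 := inner_self_eq_norm_sq _
    have h2 : RCLike.re (⟪R (S x), T x⟫_ℂ) ≤ ‖R‖ * ‖S x‖ * ‖T x‖ := by
      calc RCLike.re (⟪R (S x), T x⟫_ℂ) ≤ ‖(⟪R (S x), T x⟫_ℂ)‖ := RCLike.re_le_norm _
        _ ≤ ‖R (S x)‖ * ‖T x‖ := norm_inner_le_norm _ _
        _ ≤ ‖R‖ * ‖S x‖ * ‖T x‖ := by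
            have := R.le_opNorm (S x)
            nlinarith [norm_nonneg (T x)]
    have hR : (0:ℝ) ≤ ‖R‖ := norm_nonneg R
    simp only [map_mul, map_add, RCLike.conj_ofReal, Complex.ofReal_re, Complex.ofReal_im,
      RCLike.re_to_complex, RCLike.im_to_complex, Complex.ofReal_mul, Complex.mul_re, Complex.add_re, Complex.ofReal_re, Complex.ofReal_im, zero_mul, sub_zero] at *
    rw [hT, hS]
    norm_num
    nlinarith [mul_nonneg (norm_nonneg R) (sq_nonneg (‖T x‖ - ‖S x‖)), h2, norm_nonneg R]
end

section
/- Let X be a Hilbert C*-module over a C*-algebra A, let y₁,…,yₙ ∈ X and a₁,…,aₙ ∈ A. Then ⟨∑ᵢ yᵢaᵢ, ∑ᵢ yᵢaᵢ⟩ ≤ (max_{1≤i≤n} ∑_{j=1}^n ‖⟨yᵢ,yⱼ⟩‖) · ∑ᵢ aᵢ*aᵢ in the order of A. -/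
open scoped RightActions

/-- The Dec 2024 Mathlib `CStarModule` (right module via `SMul Aᵐᵒᵖ E`), restated with its old
meaning, since Mathlib's `CStarModule` now uses a left action. -/
class RightCStarModule (A E : Type*) [NonUnitalSemiring A] [StarRing A] [Module ℂ A]
    [AddCommGroup E] [Module ℂ E] [PartialOrder A] [SMul Aᵐᵒᵖ E] [Norm A] [Norm E]
    extends Inner A E where
  inner_add_right {x} {y} {z} : inner x (y + z) = inner x y + inner x z
  inner_self_nonneg {x} : 0 ≤ inner x x
  inner_self {x} : inner x x = 0 ↔ x = 0
  inner_op_smul_right {a : A} {x y : E} : inner x (y <• a) = inner x y * a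
  inner_smul_right_complex {z : ℂ} {x} {y} : inner x (z • y) = z • inner x y
  star_inner x y : star (inner x y) = inner y x
  norm_eq_sqrt_norm_inner_self x : ‖x‖ = √‖inner x x‖

namespace RightCStarModule

lemma inner_zero_right' {A E : Type*} [NonUnitalCStarAlgebra A] [PartialOrder A]
    [AddCommGroup E] [Module ℂ E] [SMul Aᵐᵒᵖ E] [Norm E] [RightCStarModule A E]
    (x : E) : inner A x (0 : E) = 0 := by
  have h : inner A x (0 : E) = inner A x 0 + inner A x 0 := by
    rw [← RightCStarModule.inner_add_right, add_zero]
  simpa using h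

lemma inner_add_left' {A E : Type*} [NonUnitalCStarAlgebra A] [PartialOrder A]
    [AddCommGroup E] [Module ℂ E] [SMul Aᵐᵒᵖ E] [Norm E] [RightCStarModule A E]
    (x y z : E) : inner A (x + y) z = inner A x z + inner A y z := by
  rw [← RightCStarModule.star_inner z, RightCStarModule.inner_add_right, star_add,
    RightCStarModule.star_inner, RightCStarModule.star_inner]

lemma inner_sum_right {A E : Type*} [NonUnitalCStarAlgebra A] [PartialOrder A]
    [AddCommGroup E] [Module ℂ E] [SMul Aᵐᵒᵖ E] [Norm E] [RightCStarModule A E]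
    {ι : Type*} {s : Finset ι} {x : E} {f : ι → E} :
    inner A x (∑ i ∈ s, f i) = ∑ i ∈ s, inner A x (f i) :=
  map_sum (AddMonoidHom.mk' (fun z : E => (inner A x z : A))
    (fun _ _ => RightCStarModule.inner_add_right)) f s

lemma inner_sum_left {A E : Type*} [NonUnitalCStarAlgebra A] [PartialOrder A]
    [AddCommGroup E] [Module ℂ E] [SMul Aᵐᵒᵖ E] [Norm E] [RightCStarModule A E]
    {ι : Type*} {s : Finset ι} {x : E} {f : ι → E} :
    inner A (∑ i ∈ s, f i) x = ∑ i ∈ s, inner A (f i) x :=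
  map_sum (AddMonoidHom.mk' (fun z : E => (inner A z x : A))
    (fun _ _ => inner_add_left' _ _ _)) f s

lemma inner_op_smul_left {A E : Type*} [NonUnitalCStarAlgebra A] [PartialOrder A]
    [AddCommGroup E] [Module ℂ E] [SMul Aᵐᵒᵖ E] [Norm E] [RightCStarModule A E]
    {a : A} {x y : E} : inner A (x <• a) y = star a * inner A x y := by
  rw [← RightCStarModule.star_inner y, RightCStarModule.inner_op_smul_right, star_mul,
    RightCStarModule.star_inner]

end RightCStarModule

lemma key_ineq {A : Type*} [NonUnitalCStarAlgebra A] [PartialOrder A] [StarOrderedRing A]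
    (b c d : A) :
    star c * b * d + star d * star b * c ≤ ‖b‖ • (star c * c + star d * d) := by
  by_cases hb : b = 0
  · simp [hb, smul_nonneg, add_nonneg, star_mul_self_nonneg]
  · set t : ℝ := ‖b‖ with ht
    have htpos : 0 < t := norm_pos_iff.mpr hb
    have h0 : 0 ≤ star (t • c - b * d) * (t • c - b * d) := star_mul_self_nonneg _
    have hexp : star (t • c - b * d) * (t • c - b * d)
        = ((t*t) • (star c * c) + star d * (star b * b) * d)
          - (t • (star c * b * d) + t • (star d * star b * c)) := by
      simp only [star_sub, star_smul, star_mul, star_star, smul_mul_assoc, mul_smul_comm,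
        sub_mul, mul_sub, smul_smul, star_trivial, mul_assoc]
      simp only [smul_add, smul_sub, smul_smul]
      abel
    rw [hexp] at h0
    have h2 : t • (star c * b * d) + t • (star d * star b * c)
        ≤ (t*t) • (star c * c) + star d * (star b * b) * d := sub_nonneg.mp h0
    have hconj : star d * (star b * b) * d ≤ ‖star b * b‖ • (star d * d) :=
      CStarAlgebra.star_left_conjugate_le_norm_smul
    have hnorm : ‖star b * b‖ = t * t := by
      rw [CStarRing.norm_star_mul_self]
    rw [hnorm] at hconj
    have h1 : t • (star c * b * d + star d * star b * c)
        ≤ (t*t) • (star c * c + star d * d) := by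
      rw [smul_add, smul_add]
      exact h2.trans (add_le_add_right hconj _)
    have := smul_le_smul_of_nonneg_left h1 (show (0:ℝ) ≤ t⁻¹ from by positivity)
    rwa [smul_smul, smul_smul, inv_mul_cancel₀ htpos.ne', one_smul,
      ← mul_assoc, inv_mul_cancel₀ htpos.ne', one_mul] at this

theorem stmt_4 {A E : Type*} [NonUnitalCStarAlgebra A] [PartialOrder A] [StarOrderedRing A]
    [AddCommGroup E] [Module ℂ E] [SMul Aᵐᵒᵖ E] [Norm E] [RightCStarModule A E]
    {n : ℕ} (hn : 0 < n) (y : Fin n → E) (a : Fin n → A) :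
    (inner A (∑ i, (y i <• a i)) (∑ i, (y i <• a i)) : A) ≤
      (Finset.univ.sup' ⟨⟨0, hn⟩, Finset.mem_univ _⟩
        fun i => ∑ j, ‖(inner A (y i) (y j) : A)‖) • ∑ i, star (a i) * a i := by
  set b : Fin n → Fin n → A := fun i j => inner A (y i) (y j) with hbdef
  set M : ℝ := Finset.univ.sup' ⟨⟨0, hn⟩, Finset.mem_univ _⟩ fun i => ∑ j, ‖b i j‖ with hM
  set q : Fin n → A := fun i => star (a i) * a i with hq
  set S : A := inner A (∑ i, (y i <• a i)) (∑ i, (y i <• a i)) with hSdef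
  set T : Fin n → Fin n → A := fun i j => star (a i) * b i j * a j with hT
  have hS : S = ∑ i, ∑ j, T i j := by
    rw [hSdef, RightCStarModule.inner_sum_left]
    refine Finset.sum_congr rfl fun i _ => ?_
    rw [RightCStarModule.inner_sum_right]
    refine Finset.sum_congr rfl fun j _ => ?_
    rw [RightCStarModule.inner_op_smul_left, RightCStarModule.inner_op_smul_right, ← mul_assoc]
  have hbstar : ∀ i j, b j i = star (b i j) := fun i j =>
    (RightCStarModule.star_inner (y i) (y j)).symm
  have hkey : ∀ i j, T i j + T j i ≤ ‖b i j‖ • (q i + q j) := by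
    intro i j
    have h := key_ineq (b i j) (a i) (a j)
    rw [hT]
    simp only []
    rw [hbstar i j]
    exact h
  have hMP : ∀ i, (∑ j, ‖b i j‖) • q i ≤ M • q i := by
    intro i
    have hle : (∑ j, ‖b i j‖) ≤ M :=
      Finset.le_sup' (fun i => ∑ j, ‖b i j‖) (Finset.mem_univ i)
    exact smul_le_smul_of_nonneg_right hle (star_mul_self_nonneg _)
  have hdouble : S + S ≤ M • (∑ i, q i) + M • (∑ i, q i) := by
    have hswap : (∑ i, ∑ j, T i j) = ∑ i, ∑ j, T j i := Finset.sum_comm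

    calc S + S = ∑ i, ∑ j, (T i j + T j i) := by
          rw [hS]
          nth_rewrite 2 [hswap]
          simp [← Finset.sum_add_distrib]
      _ ≤ ∑ i, ∑ j, ‖b i j‖ • (q i + q j) := by
          refine Finset.sum_le_sum fun i _ => Finset.sum_le_sum fun j _ => hkey i j
      _ = (∑ i, (∑ j, ‖b i j‖) • q i) + ∑ j, (∑ i, ‖b i j‖) • q j := by
          simp only [smul_add, Finset.sum_add_distrib]
          congr 1
          · exact Finset.sum_congr rfl fun i _ => Finset.sum_smul.symm
          · rw [Finset.sum_comm]
            exact Finset.sum_congr rfl fun j _ => Finset.sum_smul.symm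
      _ = (∑ i, (∑ j, ‖b i j‖) • q i) + ∑ j, (∑ i, ‖b j i‖) • q j := by
          congr 1
          refine Finset.sum_congr rfl fun j _ => ?_
          congr 1
          refine Finset.sum_congr rfl fun i _ => ?_
          rw [hbstar j i, norm_star]
      _ ≤ (∑ i, M • q i) + ∑ i, M • q i :=
          add_le_add (Finset.sum_le_sum fun i _ => hMP i) (Finset.sum_le_sum fun i _ => hMP i)
      _ = M • (∑ i, q i) + M • (∑ i, q i) := by rw [Finset.smul_sum]
  have h2 : (2:ℝ) • S ≤ (2:ℝ) • (M • ∑ i, q i) := by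
    rw [two_smul, two_smul]; exact hdouble
  have := smul_le_smul_of_nonneg_left h2 (show (0:ℝ) ≤ (2:ℝ)⁻¹ by norm_num)
  rw [smul_smul, smul_smul] at this
  norm_num at this
  exact this
end

section
/- Let X be a Hilbert C*-module over a C*-algebra A, x, y₁,…,yₙ ∈ X. Then (∑ᵢ ⟨yᵢ,x⟩*⟨yᵢ,x⟩)² ≤ ‖∑ᵢ ⟨yᵢ,x⟩*⟨yᵢ,x⟩‖ · (max_{1≤i≤n} ∑_{j=1}^n ‖⟨yᵢ,yⱼ⟩‖) · ⟨x,x⟩, as an inequality of positive elements of A. -/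
open scoped RightActions

/-- The Hilbert C⋆-module class as it stood in Mathlib (Dec 2024): right `A`-action via `Aᵐᵒᵖ`,
inner product linear in the second variable with `⟪x, y <• a⟫ = ⟪x, y⟫ * a`. -/
class CStarModuleRight (A : outParam <| Type*) (E : Type*) [NonUnitalSemiring A] [StarRing A]
    [Module ℂ A] [AddCommGroup E] [Module ℂ E] [PartialOrder A] [SMul Aᵐᵒᵖ E] [Norm A] [Norm E]
    extends Inner A E where
  inner_add_right {x} {y} {z} : inner x (y + z) = inner x y + inner x z
  inner_self_nonneg {x} : 0 ≤ inner x x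
  inner_self {x} : inner x x = 0 ↔ x = 0
  inner_op_smul_right {a : A} {x y : E} : inner x (y <• a) = inner x y * a
  inner_smul_right_complex {z : ℂ} {x} {y} : inner x (z • y) = z • inner x y
  star_inner x y : star (inner x y) = inner y x
  norm_eq_sqrt_norm_inner_self x : ‖x‖ = √‖inner x x‖

namespace CStarModuleRight

variable {A E : Type*} [NonUnitalCStarAlgebra A] [PartialOrder A] [AddCommGroup E] [Module ℂ E]
  [SMul Aᵐᵒᵖ E] [Norm E] [CStarModuleRight A E]

lemma inner_add_left {x y z : E} : inner A (x + y) z = inner A x z + inner A y z := by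
  rw [← star_star (inner A (x + y) z)]
  simp only [CStarModuleRight.star_inner, CStarModuleRight.inner_add_right, star_add]

lemma inner_op_smul_left {a : A} {x y : E} : inner A (x <• a) y = star a * inner A x y := by
  rw [← CStarModuleRight.star_inner, CStarModuleRight.inner_op_smul_right, star_mul,
    CStarModuleRight.star_inner]

lemma inner_zero_right {x : E} : inner A x (0 : E) = 0 := by
  have h := CStarModuleRight.inner_add_right (x := x) (y := (0 : E)) (z := (0 : E))
  rw [add_zero] at h
  simpa using h

lemma inner_zero_left {x : E} : inner A (0 : E) x = 0 := by
  rw [← CStarModuleRight.star_inner, CStarModuleRight.inner_zero_right, star_zero]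

lemma inner_neg_right {x y : E} : inner A x (-y) = -inner A x y := by
  have h := CStarModuleRight.inner_add_right (x := x) (y := y) (z := -y)
  rw [add_neg_cancel, CStarModuleRight.inner_zero_right] at h
  exact (neg_eq_of_add_eq_zero_right h.symm).symm

lemma inner_neg_left {x y : E} : inner A (-x) y = -inner A x y := by
  rw [← CStarModuleRight.star_inner, CStarModuleRight.inner_neg_right, star_neg,
    CStarModuleRight.star_inner]

lemma inner_sub_right {x y z : E} : inner A x (y - z) = inner A x y - inner A x z := by
  rw [sub_eq_add_neg, CStarModuleRight.inner_add_right, CStarModuleRight.inner_neg_right,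
    ← sub_eq_add_neg]

lemma inner_sub_left {x y z : E} : inner A (x - y) z = inner A x z - inner A y z := by
  rw [sub_eq_add_neg, CStarModuleRight.inner_add_left, CStarModuleRight.inner_neg_left,
    ← sub_eq_add_neg]

lemma inner_sum_right {ι : Type*} {s : Finset ι} {x : E} {y : ι → E} :
    inner A x (∑ i ∈ s, y i) = ∑ i ∈ s, inner A x (y i) := by
  classical
  induction s using Finset.induction_on with
  | empty => simp [CStarModuleRight.inner_zero_right]
  | insert i s hi ih =>
    rw [Finset.sum_insert hi, Finset.sum_insert hi, CStarModuleRight.inner_add_right, ih]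

lemma inner_sum_left {ι : Type*} {s : Finset ι} {x : ι → E} {y : E} :
    inner A (∑ i ∈ s, x i) y = ∑ i ∈ s, inner A (x i) y := by
  rw [← CStarModuleRight.star_inner, CStarModuleRight.inner_sum_right, star_sum]
  simp only [CStarModuleRight.star_inner]

lemma inner_smul_right_real {r : ℝ} {x y : E} : inner A x (r • y) = r • inner A x y := by
  have h₁ : r • y = (r : ℂ) • y := by simp
  rw [h₁, CStarModuleRight.inner_smul_right_complex]
  simp

lemma inner_smul_left_real {r : ℝ} {x y : E} : inner A (r • x) y = r • inner A x y := by
  rw [← CStarModuleRight.star_inner, CStarModuleRight.inner_smul_right_real, star_smul,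
    star_trivial, CStarModuleRight.star_inner]

lemma norm_sq_eq (x : E) : ‖x‖ ^ 2 = ‖inner A x x‖ := by
  rw [CStarModuleRight.norm_eq_sqrt_norm_inner_self x, Real.sq_sqrt (norm_nonneg _)]

lemma inner_mul_inner_swap_le [StarOrderedRing A] {x y : E} :
    inner A y x * inner A x y ≤ ‖x‖ ^ 2 • inner A y y := by
  rcases eq_or_ne x 0 with rfl | h
  · rw [CStarModuleRight.inner_zero_left, CStarModuleRight.inner_zero_right, zero_mul]
    exact smul_nonneg (sq_nonneg _) CStarModuleRight.inner_self_nonneg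
  · set r := ‖x‖ ^ 2 with hrdef
    have hr : 0 < r := by
      rw [hrdef, CStarModuleRight.norm_sq_eq x]
      exact norm_pos_iff.mpr (fun h' => h (CStarModuleRight.inner_self.mp h'))
    have hsa : star (inner A x y) = inner A y x := CStarModuleRight.star_inner x y
    set a := inner A x y with ha
    have key : (0 : A) ≤ inner A (x <• a - r • y) (x <• a - r • y) :=
      CStarModuleRight.inner_self_nonneg
    have e : inner A (x <• a - r • y) (x <• a - r • y)
        = star a * inner A x x * a - r • (star a * a) - r • (inner A y x * a)
          + (r * r) • inner A y y := by
      simp only [CStarModuleRight.inner_sub_left, CStarModuleRight.inner_sub_right,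
        CStarModuleRight.inner_op_smul_left, CStarModuleRight.inner_op_smul_right,
        CStarModuleRight.inner_smul_left_real, CStarModuleRight.inner_smul_right_real,
        mul_smul_comm, smul_mul_assoc, smul_smul, smul_sub, mul_assoc, sub_mul, mul_sub, ← ha]
      abel
    have h1 : star a * inner A x x * a ≤ r • (star a * a) := by
      have := CStarAlgebra.star_left_conjugate_le_norm_smul (a := a) (b := inner A x x)
        (CStarModuleRight.star_inner x x)
      rwa [← CStarModuleRight.norm_sq_eq x] at this
    have h2 : r • (star a * a) ≤ r • (r • inner A y y) := by
      rw [e, ← hsa] at key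
      rw [smul_smul, ← sub_nonneg]
      have := add_nonneg key (sub_nonneg.mpr h1)
      convert this using 1
      abel
    rw [hsa] at h2
    exact (smul_le_smul_iff_of_pos_left hr).mp h2

end CStarModuleRight

lemma pair_ineq {A : Type*} [NonUnitalCStarAlgebra A] [PartialOrder A] [StarOrderedRing A]
    (u v c : A) : star u * (c * v) + star v * (star c * u) ≤ ‖c‖ • (star u * u + star v * v) := by
  rcases eq_or_ne c 0 with rfl | hc
  · simpa using smul_nonneg (norm_nonneg (0:A))
      (add_nonneg (star_mul_self_nonneg u) (star_mul_self_nonneg v))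
  set t : ℝ := ‖c‖ with htdef
  have ht : (0:ℝ) < t := norm_pos_iff.mpr hc
  have key : (0:A) ≤ star (t • u - c * v) * (t • u - c * v) := star_mul_self_nonneg _
  have expand : star (t • u - c * v) * (t • u - c * v)
      = (t*t) • (star u * u) - t • (star u * (c * v)) - t • (star v * (star c * u))
        + star v * (star c * (c * v)) := by
    simp only [star_sub, star_smul, star_mul, sub_mul, mul_sub, smul_mul_assoc,
      mul_smul_comm, smul_smul, smul_sub, mul_assoc, star_trivial]
    abel
  rw [expand] at key
  have h1 : t • (star u * (c * v)) + t • (star v * (star c * u))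
      ≤ (t*t) • (star u * u) + star v * (star c * (c * v)) := by
    rwa [← sub_nonneg, show (t*t) • (star u * u) + star v * (star c * (c*v))
      - (t • (star u * (c * v)) + t • (star v * (star c * u)))
      = (t*t) • (star u * u) - t • (star u * (c * v)) - t • (star v * (star c * u))
        + star v * (star c * (c * v)) by abel]
  have h2 : star v * (star c * (c * v)) ≤ (t*t) • (star v * v) := by
    have := CStarAlgebra.star_left_conjugate_le_norm_smul (a := v) (b := star c * c)
      (IsSelfAdjoint.star_mul_self c)
    rw [CStarRing.norm_star_mul_self] at this
    calc star v * (star c * (c * v)) = star v * (star c * c) * v := by rw [mul_assoc, mul_assoc]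
    _ ≤ (t*t) • (star v * v) := this
  have h3 : t • (star u * (c * v) + star v * (star c * u))
      ≤ t • (t • (star u * u + star v * v)) := by
    rw [smul_add]
    calc t • (star u * (c * v)) + t • (star v * (star c * u))
        ≤ (t*t) • (star u * u) + star v * (star c * (c * v)) := h1
      _ ≤ (t*t) • (star u * u) + (t*t) • (star v * v) := by gcongr
      _ = t • (t • (star u * u + star v * v)) := by simp [smul_smul, smul_add]
  have := smul_le_smul_of_nonneg_left h3 (le_of_lt (inv_pos.mpr ht))
  simpa [smul_smul, ← mul_assoc, inv_mul_cancel₀ ht.ne'] using this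

open scoped RightActions
open CStarModuleRight Finset

theorem stmt_5 {A E : Type*} [NonUnitalCStarAlgebra A] [PartialOrder A] [StarOrderedRing A]
    [AddCommGroup E] [Module ℂ E] [SMul Aᵐᵒᵖ E] [Norm E] [CStarModuleRight A E]
    {n : ℕ} (hn : 0 < n) (x : E) (y : Fin n → E) :
    (∑ i, star (inner A (y i) x) * (inner A (y i) x)) *
        (∑ i, star (inner A (y i) x) * (inner A (y i) x)) ≤
      (‖∑ i, star (inner A (y i) x) * (inner A (y i) x)‖ *
        Finset.univ.sup' ⟨⟨0, hn⟩, Finset.mem_univ _⟩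
          fun i => ∑ j, ‖(inner A (y i) (y j))‖) • (inner A x x) := by
  classical
  set a : Fin n → A := fun i => (inner A (y i) x : A) with ha
  set b : Fin n → Fin n → A := fun i j => (inner A (y i) (y j) : A) with hb
  set T : A := ∑ i, star (a i) * a i with hT
  set M : ℝ := Finset.univ.sup' ⟨⟨0, hn⟩, Finset.mem_univ _⟩ (fun i => ∑ j, ‖b i j‖) with hM
  set z : E := ∑ i, (y i) <• (a i) with hz
  have hzx : (inner A z x : A) = T := by
    simp [hz, inner_sum_left, inner_op_smul_left, hT, ha]
  have hxz : (inner A x z : A) = T := by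
    rw [← star_inner z, hzx, hT]
    simp [star_sum, star_mul]
  have hzz : (inner A z z : A) = ∑ i, ∑ j, star (a i) * (b i j * a j) := by
    rw [hz, inner_sum_left]
    refine Finset.sum_congr rfl fun i _ => ?_
    rw [inner_op_smul_left, inner_sum_right, Finset.mul_sum]
    refine Finset.sum_congr rfl fun j _ => ?_
    rw [inner_op_smul_right]
  set S : A := ∑ i, ∑ j, star (a i) * (b i j * a j) with hS
  -- bound on S
  have hMle : ∀ i : Fin n, ∑ j, ‖b i j‖ ≤ M := fun i => by
    rw [hM]
    exact Finset.le_sup' (fun i => ∑ j, ‖b i j‖) (Finset.mem_univ i)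
  have hM0 : 0 ≤ M :=
    le_trans (Finset.sum_nonneg fun j _ => norm_nonneg _) (hMle ⟨0, hn⟩)
  have hSswap : S = ∑ i, ∑ j, star (a j) * (star (b i j) * a i) := by
    rw [hS, Finset.sum_comm]
    refine Finset.sum_congr rfl fun i _ => Finset.sum_congr rfl fun j _ => ?_
    have h : star (b i j) = b j i := by simp [hb, CStarModuleRight.star_inner]
    rw [h]
  have h2S : S + S ≤ ∑ i, ∑ j, ‖b i j‖ • (star (a i) * a i + star (a j) * a j) := by
    nth_rewrite 2 [hSswap]
    rw [hS, ← Finset.sum_add_distrib]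
    refine Finset.sum_le_sum fun i _ => ?_
    rw [← Finset.sum_add_distrib]
    exact Finset.sum_le_sum fun j _ => pair_ineq (a i) (a j) (b i j)
  have hRHS : ∑ i, ∑ j, ‖b i j‖ • (star (a i) * a i + star (a j) * a j)
      = (∑ i, (∑ j, ‖b i j‖) • (star (a i) * a i)) + ∑ i, (∑ j, ‖b i j‖) • (star (a i) * a i) := by
    simp only [smul_add, Finset.sum_add_distrib, Finset.sum_smul]
    congr 1
    rw [Finset.sum_comm]
    refine Finset.sum_congr rfl fun i _ => Finset.sum_congr rfl fun j _ => ?_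
    have hnorm : ‖b j i‖ = ‖b i j‖ := by
      show ‖(inner A (y j) (y i) : A)‖ = ‖(inner A (y i) (y j) : A)‖
      rw [show ((inner A (y j) (y i)) : A) = star (inner A (y i) (y j) : A) from
        (CStarModuleRight.star_inner _ _).symm, norm_star]
    rw [hnorm]
  have hW : (∑ i, (∑ j, ‖b i j‖) • (star (a i) * a i)) ≤ M • T := by
    rw [hT, Finset.smul_sum]
    exact Finset.sum_le_sum fun i _ =>
      smul_le_smul_of_nonneg_right (hMle i) (star_mul_self_nonneg (a i))
  have hSMT : S ≤ M • T := by
    have h : S + S ≤ M • T + M • T := le_trans h2S (hRHS ▸ add_le_add hW hW)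
    have h' := smul_le_smul_of_nonneg_left h (show (0:ℝ) ≤ 2⁻¹ by norm_num)
    calc S = (2⁻¹ : ℝ) • (S + S) := by module
      _ ≤ (2⁻¹ : ℝ) • (M • T + M • T) := h'
      _ = M • T := by module
  have hS0 : (0:A) ≤ S := hzz ▸ CStarModuleRight.inner_self_nonneg
  have hSnorm : ‖S‖ ≤ ‖T‖ * M := by
    calc ‖S‖ ≤ ‖M • T‖ := CStarAlgebra.norm_le_norm_of_nonneg_of_le hS0 hSMT
      _ = M * ‖T‖ := by rw [norm_smul, Real.norm_of_nonneg hM0]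
      _ = ‖T‖ * M := mul_comm _ _
  have cs : (inner A x z : A) * (inner A z x : A) ≤ ‖z‖ ^ 2 • (inner A x x : A) :=
    CStarModuleRight.inner_mul_inner_swap_le
  rw [hxz, hzx] at cs
  have hnz : ‖z‖ ^ 2 = ‖S‖ := by rw [CStarModuleRight.norm_sq_eq, hzz, hS]
  calc T * T ≤ ‖z‖ ^ 2 • (inner A x x : A) := cs
    _ = ‖S‖ • (inner A x x : A) := by rw [hnz]
    _ ≤ (‖T‖ * M) • (inner A x x : A) :=
        smul_le_smul_of_nonneg_right hSnorm CStarModuleRight.inner_self_nonneg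
end

section
/- Let T be an invertible bounded operator on a Hilbert space H and S₁, S₂ ∈ B(H). Then (TS₁ + (T*)⁻¹S₂)*(TS₁ + (T*)⁻¹S₂) ≤ [1 + max(‖T‖², ‖T⁻¹‖²)] · (S₁*S₁ + S₂*S₂) in the Loewner order. -/
open ContinuousLinearMap

theorem stmt_7 {H : Type*} [NormedAddCommGroup H] [InnerProductSpace ℂ H]
    [CompleteSpace H] (T Tinv S₁ S₂ : H →L[ℂ] H)
    (h₁ : T * Tinv = 1) (h₂ : Tinv * T = 1) :
    adjoint (T * S₁ + adjoint Tinv * S₂) * (T * S₁ + adjoint Tinv * S₂) ≤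
      (1 + max (‖T‖ ^ 2) (‖Tinv‖ ^ 2)) • (adjoint S₁ * S₁ + adjoint S₂ * S₂) := by
  set R := T * S₁ + adjoint Tinv * S₂ with hR
  set c : ℝ := 1 + max (‖T‖ ^ 2) (‖Tinv‖ ^ 2) with hc
  rw [ContinuousLinearMap.le_def, ContinuousLinearMap.isPositive_def']
  constructor
  · apply IsSelfAdjoint.sub
    · apply IsSelfAdjoint.smul (star_trivial c)
      apply IsSelfAdjoint.add
      · rw [← ContinuousLinearMap.star_eq_adjoint]
        exact IsSelfAdjoint.star_mul_self S₁
      · rw [← ContinuousLinearMap.star_eq_adjoint]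
        exact IsSelfAdjoint.star_mul_self S₂
    · rw [← ContinuousLinearMap.star_eq_adjoint]
      exact IsSelfAdjoint.star_mul_self R
  · intro x
    rw [ContinuousLinearMap.reApplyInnerSelf_apply]
    have key : ‖R x‖ ^ 2 ≤ c * (‖S₁ x‖ ^ 2 + ‖S₂ x‖ ^ 2) := by
      have hRx : R x = T (S₁ x) + adjoint Tinv (S₂ x) := rfl
      have hcross : RCLike.re (inner ℂ (T (S₁ x)) (adjoint Tinv (S₂ x)) : ℂ)
          = RCLike.re (inner ℂ (S₁ x) (S₂ x) : ℂ) := by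
        rw [ContinuousLinearMap.adjoint_inner_right]
        congr 2
        have : Tinv (T (S₁ x)) = (Tinv * T) (S₁ x) := rfl
        rw [this, h₂]; rfl
      have hexp : ‖R x‖ ^ 2 = ‖T (S₁ x)‖ ^ 2 + 2 * RCLike.re (inner ℂ (S₁ x) (S₂ x) : ℂ)
          + ‖adjoint Tinv (S₂ x)‖ ^ 2 := by
        rw [hRx, ← hcross, @norm_add_sq ℂ]
      have h1 : ‖T (S₁ x)‖ ^ 2 ≤ ‖T‖ ^ 2 * ‖S₁ x‖ ^ 2 := by
        rw [← mul_pow]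
        exact pow_le_pow_left₀ (norm_nonneg _) (T.le_opNorm _) 2
      have h2 : ‖adjoint Tinv (S₂ x)‖ ^ 2 ≤ ‖Tinv‖ ^ 2 * ‖S₂ x‖ ^ 2 := by
        rw [← mul_pow]
        refine pow_le_pow_left₀ (norm_nonneg _) ?_ 2
        calc ‖adjoint Tinv (S₂ x)‖ ≤ ‖adjoint Tinv‖ * ‖S₂ x‖ := (adjoint Tinv).le_opNorm _
        _ = ‖Tinv‖ * ‖S₂ x‖ := by rw [← ContinuousLinearMap.star_eq_adjoint, norm_star]
      have h3 : 2 * RCLike.re (inner ℂ (S₁ x) (S₂ x) : ℂ) ≤ ‖S₁ x‖ ^ 2 + ‖S₂ x‖ ^ 2 := by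
        have := re_inner_le_norm (𝕜 := ℂ) (S₁ x) (S₂ x)
        nlinarith [sq_nonneg (‖S₁ x‖ - ‖S₂ x‖)]
      have hM1 : ‖T‖ ^ 2 ≤ max (‖T‖ ^ 2) (‖Tinv‖ ^ 2) := le_max_left _ _
      have hM2 : ‖Tinv‖ ^ 2 ≤ max (‖T‖ ^ 2) (‖Tinv‖ ^ 2) := le_max_right _ _
      have hs1 : (0:ℝ) ≤ ‖S₁ x‖ ^ 2 := sq_nonneg _
      have hs2 : (0:ℝ) ≤ ‖S₂ x‖ ^ 2 := sq_nonneg _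
      rw [hexp, hc]
      nlinarith
    have smul_re : ∀ u : H, RCLike.re (inner ℂ (c • u) x : ℂ) = c * RCLike.re (inner ℂ u x : ℂ) := by
      intro u
      rw [RCLike.real_smul_eq_coe_smul (K := ℂ), inner_smul_left]
      simp [RCLike.conj_ofReal]
    have lhs : RCLike.re (inner ℂ ((c • (adjoint S₁ * S₁ + adjoint S₂ * S₂)
        - adjoint R * R) x) x : ℂ)
        = c * (‖S₁ x‖ ^ 2 + ‖S₂ x‖ ^ 2) - ‖R x‖ ^ 2 := by
      simp only [ContinuousLinearMap.sub_apply, ContinuousLinearMap.smul_apply,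
        ContinuousLinearMap.mul_apply, map_sub, map_add, inner_sub_left, smul_re,
        ContinuousLinearMap.add_apply, inner_add_left, map_mul,
        ContinuousLinearMap.adjoint_inner_left, inner_self_eq_norm_sq]
    rw [lhs]
    linarith
end

section
/- Let X be a Hilbert C*-module over a C*-algebra A, x, y₁,…,yₙ ∈ X and a₁,…,aₙ ∈ A. Then (∑ᵢ aᵢ⟨yᵢ,x⟩)*(∑ᵢ aᵢ⟨yᵢ,x⟩) ≤ (∑ᵢ ‖aᵢ‖²) · [max_{1≤i≤n} ‖yᵢ‖² + (∑_{i≠j} ‖⟨yᵢ,yⱼ⟩‖²)^{1/2}] · ⟨x,x⟩, as an inequality of positive elements of A. -/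
open scoped RightActions

/-- The Hilbert C⋆-module class as Mathlib defined it in December 2024 (right `A`-action through
`Aᵐᵒᵖ`); Mathlib's current `CStarModule` uses a left action and has another meaning. -/
class CStarModuleOld (A E : Type*) [NonUnitalSemiring A] [StarRing A]
    [Module ℂ A] [AddCommGroup E] [Module ℂ E] [PartialOrder A] [SMul Aᵐᵒᵖ E] [Norm A] [Norm E]
    extends Inner A E where
  inner_add_right {x} {y} {z} : inner x (y + z) = inner x y + inner x z
  inner_self_nonneg {x} : 0 ≤ inner x x
  inner_self {x} : inner x x = 0 ↔ x = 0
  inner_op_smul_right {a : A} {x y : E} : inner x (y <• a) = inner x y * a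
  inner_smul_right_complex {z : ℂ} {x} {y} : inner x (z • y) = z • inner x y
  star_inner x y : star (inner x y) = inner y x
  norm_eq_sqrt_norm_inner_self x : ‖x‖ = Real.sqrt ‖inner x x‖

namespace CStarModuleOld

variable {A E : Type*} [NonUnitalCStarAlgebra A] [PartialOrder A] [StarOrderedRing A]
  [AddCommGroup E] [Module ℂ E] [SMul Aᵐᵒᵖ E] [Norm E] [CStarModuleOld A E]

lemma inner_add_left' {x y z : E} : inner A (x + y) z = inner A x z + inner A y z := by
  rw [← star_inner (A := A) z (x + y), inner_add_right, star_add, star_inner, star_inner]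

/-- inner product with a fixed left argument, as an additive map -/
def innerRight (x : E) : E →+ A :=
  AddMonoidHom.mk' (fun y => inner A x y) (fun _ _ => inner_add_right)

/-- inner product with a fixed right argument, as an additive map -/
def innerLeft (y : E) : E →+ A :=
  AddMonoidHom.mk' (fun x => inner A x y) (fun _ _ => inner_add_left')

lemma inner_sum_right {ι : Type*} {s : Finset ι} {x : E} {y : ι → E} :
    inner A x (∑ i ∈ s, y i) = ∑ i ∈ s, inner A x (y i) :=
  map_sum (innerRight (A := A) x) ..

lemma inner_sum_left {ι : Type*} {s : Finset ι} {x : ι → E} {y : E} :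
    inner A (∑ i ∈ s, x i) y = ∑ i ∈ s, inner A (x i) y :=
  map_sum (innerLeft (A := A) y) ..

lemma inner_sub_right' {x y z : E} : inner A x (y - z) = inner A x y - inner A x z :=
  map_sub (innerRight (A := A) x) ..

lemma inner_sub_left' {x y z : E} : inner A (x - y) z = inner A x z - inner A y z :=
  map_sub (innerLeft (A := A) z) ..

lemma inner_op_smul_left {b : A} {x y : E} : inner A (x <• b) y = star b * inner A x y := by
  rw [← star_inner (A := A) y (x <• b), inner_op_smul_right, star_mul, star_inner]

lemma inner_smul_left_complex' {c : ℂ} {x y : E} : inner A (c • x) y = star c • inner A x y := by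
  rw [← star_inner (A := A) y (c • x), inner_smul_right_complex, star_smul, star_inner]

lemma norm_sq_eq {x : E} : ‖x‖ ^ 2 = ‖inner A x x‖ := by
  rw [norm_eq_sqrt_norm_inner_self (A := A) x, Real.sq_sqrt (norm_nonneg _)]

lemma inner_mul_inner_swap_le {x z : E} :
    inner A x z * inner A z x ≤ ‖z‖ ^ 2 • inner A x x := by
  rcases eq_or_ne z 0 with h | h
  · subst h
    have h0 : inner A x (0 : E) = 0 := map_zero (innerRight (A := A) x)
    rw [h0, zero_mul]
    exact smul_nonneg (sq_nonneg _) inner_self_nonneg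
  · have hc : 0 < ‖z‖ ^ 2 := by
      rw [norm_sq_eq (A := A)]
      exact norm_pos_iff.2 fun H => h (inner_self.1 H)
    have e : inner A (z <• inner A z x - ((‖z‖ ^ 2 : ℝ) : ℂ) • x)
        (z <• inner A z x - ((‖z‖ ^ 2 : ℝ) : ℂ) • x)
        = star (inner A z x) * inner A z z * inner A z x
          - ‖z‖ ^ 2 • (star (inner A z x) * inner A z x)
          - ‖z‖ ^ 2 • (star (inner A z x) * inner A z x)
          + ‖z‖ ^ 2 • (‖z‖ ^ 2 • inner A x x) := by
      simp only [inner_sub_left', inner_sub_right', inner_op_smul_left, inner_op_smul_right,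
        inner_smul_left_complex', inner_smul_right_complex, Complex.star_def,
        Complex.conj_ofReal, mul_smul_comm, smul_mul_assoc, mul_assoc,
        ← star_inner (A := A) z x]
      simp only [Complex.coe_smul, sub_mul, mul_sub, smul_sub, smul_mul_assoc, mul_smul_comm,
        mul_assoc]
      abel
    have h0 : (0 : A) ≤ _ := inner_self_nonneg (A := A)
      (x := z <• inner A z x - ((‖z‖ ^ 2 : ℝ) : ℂ) • x)
    rw [e] at h0
    have step : star (inner A z x) * inner A z z * inner A z x
        ≤ ‖inner A z z‖ • (star (inner A z x) * inner A z x) :=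
      CStarAlgebra.star_left_conjugate_le_norm_smul (star_inner (A := A) z z)
    rw [← norm_sq_eq] at step
    have h3 := sub_nonneg.2 step
    have h4 : (0 : A) ≤ ‖z‖ ^ 2 • (‖z‖ ^ 2 • inner A x x)
        - ‖z‖ ^ 2 • (star (inner A z x) * inner A z x) := by
      have : ‖z‖ ^ 2 • (‖z‖ ^ 2 • inner A x x) - ‖z‖ ^ 2 • (star (inner A z x) * inner A z x)
          = (star (inner A z x) * inner A z z * inner A z x
          - ‖z‖ ^ 2 • (star (inner A z x) * inner A z x)
          - ‖z‖ ^ 2 • (star (inner A z x) * inner A z x)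
          + ‖z‖ ^ 2 • (‖z‖ ^ 2 • inner A x x))
          + (‖z‖ ^ 2 • (star (inner A z x) * inner A z x)
            - star (inner A z x) * inner A z z * inner A z x) := by abel
      rw [this]
      exact add_nonneg h0 h3
    rw [sub_nonneg, smul_le_smul_iff_of_pos_left hc, star_inner] at h4
    exact h4

end CStarModuleOld

open CStarModuleOld Finset

theorem stmt_9 {A E : Type*} [NonUnitalCStarAlgebra A] [PartialOrder A] [StarOrderedRing A]
    [AddCommGroup E] [Module ℂ E] [SMul Aᵐᵒᵖ E] [Norm E] [CStarModuleOld A E]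
    {n : ℕ} (hn : 0 < n) (x : E) (y : Fin n → E) (a : Fin n → A) :
    star (∑ i, a i * (inner A (y i) x : A)) * (∑ i, a i * (inner A (y i) x : A)) ≤
      ((∑ i, ‖a i‖ ^ 2) *
        ((Finset.univ.sup' ⟨⟨0, hn⟩, Finset.mem_univ _⟩ fun i => ‖y i‖ ^ 2) +
          Real.sqrt (∑ i, ∑ j, if i = j then 0 else ‖(inner A (y i) (y j) : A)‖ ^ 2))) •
        (inner A x x : A) := by
  set M : ℝ := Finset.univ.sup' ⟨⟨0, hn⟩, Finset.mem_univ _⟩ fun i => ‖y i‖ ^ 2 with hM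
  set S : ℝ := ∑ i, ∑ j, if i = j then 0 else ‖(inner A (y i) (y j) : A)‖ ^ 2 with hS
  set z : E := ∑ i, y i <• star (a i) with hz
  have hzx : (inner A z x : A) = ∑ i, a i * (inner A (y i) x : A) := by
    simp only [hz, inner_sum_left, inner_op_smul_left, star_star]
  -- Cauchy-Schwarz
  have hCS : star (inner A z x : A) * (inner A z x : A) ≤ ‖z‖ ^ 2 • (inner A x x : A) := by
    rw [CStarModuleOld.star_inner]
    exact CStarModuleOld.inner_mul_inner_swap_le
  rw [← hzx]
  refine hCS.trans (smul_le_smul_of_nonneg_right ?_ CStarModuleOld.inner_self_nonneg)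
  -- remains: ‖z‖^2 ≤ (∑ ‖a i‖^2) * (M + √S)
  set T : Fin n → Fin n → A := fun i j => a i * ((inner A (y i) (y j) : A) * star (a j)) with hT
  have hzz : (inner A z z : A) = ∑ i, ∑ j, T i j := by
    simp only [hz, inner_sum_left, inner_sum_right, inner_op_smul_left, inner_op_smul_right,
      star_star, hT, mul_assoc, Finset.mul_sum, Finset.sum_mul]
    exact Finset.sum_comm
  have hsplit : (inner A z z : A) = (∑ i, T i i) + ∑ i, ∑ j, (if i = j then 0 else T i j) := by
    have key : ∀ i ∈ Finset.univ, ∑ j, T i j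
        = T i i + ∑ j, (if i = j then 0 else T i j) := by
      intro i _
      calc ∑ j, T i j
          = ∑ j, ((if i = j then T i j else 0) + (if i = j then 0 else T i j)) :=
            Finset.sum_congr rfl fun j _ => by split <;> simp
        _ = (∑ j, if i = j then T i j else 0) + ∑ j, (if i = j then 0 else T i j) :=
            Finset.sum_add_distrib
        _ = T i i + ∑ j, (if i = j then 0 else T i j) := by
            rw [Finset.sum_ite_eq]; simp
    rw [hzz, Finset.sum_congr rfl key, Finset.sum_add_distrib]
  have hnz : ‖z‖ ^ 2 = ‖(inner A z z : A)‖ := CStarModuleOld.norm_sq_eq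
  have hDiag : ‖∑ i, T i i‖ ≤ (∑ i, ‖a i‖ ^ 2) * M := by
    calc ‖∑ i, T i i‖ ≤ ∑ i, ‖T i i‖ := norm_sum_le _ _
      _ ≤ ∑ i, ‖a i‖ ^ 2 * M := by
          refine Finset.sum_le_sum fun i _ => ?_
          have h1 : ‖T i i‖ ≤ ‖a i‖ * (‖(inner A (y i) (y i) : A)‖ * ‖star (a i)‖) :=
            (norm_mul_le _ _).trans (by gcongr; exact norm_mul_le _ _)
          have h2 : ‖(inner A (y i) (y i) : A)‖ = ‖y i‖ ^ 2 := CStarModuleOld.norm_sq_eq.symm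
          have h3 : ‖y i‖ ^ 2 ≤ M := Finset.le_sup' (f := fun i => ‖y i‖ ^ 2) (Finset.mem_univ i)
          calc ‖T i i‖ ≤ ‖a i‖ * (‖y i‖ ^ 2 * ‖a i‖) := by rwa [h2, norm_star] at h1
            _ = ‖a i‖ ^ 2 * ‖y i‖ ^ 2 := by ring
            _ ≤ ‖a i‖ ^ 2 * M := by gcongr
      _ = (∑ i, ‖a i‖ ^ 2) * M := by rw [Finset.sum_mul]
  have hOff : ‖∑ i, ∑ j, (if i = j then 0 else T i j)‖ ≤ (∑ i, ‖a i‖ ^ 2) * Real.sqrt S := by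
    have h1 : ‖∑ i, ∑ j, (if i = j then 0 else T i j)‖ ≤
        ∑ i, ∑ j, (if i = j then 0 else ‖a i‖ * ‖a j‖ * ‖(inner A (y i) (y j) : A)‖) := by
      refine (norm_sum_le _ _).trans (Finset.sum_le_sum fun i _ => ?_)
      refine (norm_sum_le _ _).trans (Finset.sum_le_sum fun j _ => ?_)
      split
      · simp
      · calc ‖T i j‖ ≤ ‖a i‖ * (‖(inner A (y i) (y j) : A)‖ * ‖star (a j)‖) :=
              (norm_mul_le _ _).trans (by gcongr; exact norm_mul_le _ _)
          _ = ‖a i‖ * ‖a j‖ * ‖(inner A (y i) (y j) : A)‖ := by rw [norm_star]; ring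
    refine h1.trans ?_
    rw [← Finset.sum_product' (s := Finset.univ) (t := Finset.univ)
      (f := fun i j => if i = j then 0 else ‖a i‖ * ‖a j‖ * ‖(inner A (y i) (y j) : A)‖)]
    have hCS2 := Real.sum_mul_le_sqrt_mul_sqrt (Finset.univ ×ˢ Finset.univ)
      (fun p : Fin n × Fin n => ‖a p.1‖ * ‖a p.2‖)
      (fun p : Fin n × Fin n => if p.1 = p.2 then 0 else ‖(inner A (y p.1) (y p.2) : A)‖)
    have heq : ∀ p : Fin n × Fin n,
        (‖a p.1‖ * ‖a p.2‖) * (if p.1 = p.2 then 0 else ‖(inner A (y p.1) (y p.2) : A)‖)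
          = if p.1 = p.2 then 0 else ‖a p.1‖ * ‖a p.2‖ * ‖(inner A (y p.1) (y p.2) : A)‖ := by
      intro p; split <;> simp
    rw [Finset.sum_congr rfl fun p _ => (heq p).symm]
    refine hCS2.trans (le_of_eq ?_)
    congr 1
    · rw [show (∑ p ∈ Finset.univ ×ˢ Finset.univ, (‖a p.1‖ * ‖a p.2‖) ^ 2)
          = (∑ i, ‖a i‖ ^ 2) * (∑ i, ‖a i‖ ^ 2) from ?_]
      · rw [Real.sqrt_mul_self (by positivity)]
      · rw [Finset.sum_mul_sum, ← Finset.sum_product']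
        exact Finset.sum_congr rfl fun p _ => (mul_pow _ _ _)
    · congr 1
      rw [Finset.sum_product' (f := fun i j =>
        (if i = j then (0:ℝ) else ‖(inner A (y i) (y j) : A)‖) ^ 2)]
      refine Finset.sum_congr rfl fun i _ => Finset.sum_congr rfl fun j _ => ?_
      split <;> simp
  calc ‖z‖ ^ 2 = ‖(inner A z z : A)‖ := hnz
    _ ≤ ‖∑ i, T i i‖ + ‖∑ i, ∑ j, (if i = j then 0 else T i j)‖ := by
        rw [hsplit]; exact norm_add_le _ _
    _ ≤ (∑ i, ‖a i‖ ^ 2) * M + (∑ i, ‖a i‖ ^ 2) * Real.sqrt S := add_le_add hDiag hOff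
    _ = (∑ i, ‖a i‖ ^ 2) * (M + Real.sqrt S) := by ring
end

section
/- Let X be a Hilbert C*-module over a C*-algebra A and x, y₁,…,yₙ ∈ X. Then (∑ᵢ ⟨yᵢ,x⟩*⟨yᵢ,x⟩)² ≤ (∑ᵢ ‖⟨yᵢ,x⟩‖²) · [max_{1≤i≤n} ‖yᵢ‖² + (∑_{i≠j} ‖⟨yᵢ,yⱼ⟩‖²)^{1/2}] · ⟨x,x⟩, as an inequality in the order of A. -/
open scoped RightActions

/-- The class `CStarModule` as it stood in Mathlib of December 2024 (right `A`-module via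
`Aᵐᵒᵖ`, inner product `A`-linear on the right); Mathlib's current `CStarModule` uses a left
action `[SMul A E]` with different axioms. -/
class OldCStarModule (A E : Type*) [NonUnitalSemiring A] [StarRing A] [Module ℂ A]
    [AddCommGroup E] [Module ℂ E] [PartialOrder A] [SMul Aᵐᵒᵖ E] [Norm A] [Norm E]
    extends Inner A E where
  inner_add_right {x} {y} {z} : inner x (y + z) = inner x y + inner x z
  inner_self_nonneg {x} : 0 ≤ inner x x
  inner_self {x} : inner x x = 0 ↔ x = 0
  inner_op_smul_right {a : A} {x y : E} : inner x (y <• a) = inner x y * a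
  inner_smul_right_complex {z : ℂ} {x} {y} : inner x (z • y) = z • inner x y
  star_inner x y : star (inner x y) = inner y x
  norm_eq_sqrt_norm_inner_self x : ‖x‖ = Real.sqrt ‖inner x x‖

namespace OldCStarModule

section helpers

variable {A E : Type*} [NonUnitalCStarAlgebra A] [PartialOrder A] [StarOrderedRing A]
  [AddCommGroup E] [Module ℂ E] [SMul Aᵐᵒᵖ E] [Norm E] [OldCStarModule A E]

attribute [simp] OldCStarModule.inner_add_right OldCStarModule.star_inner
  OldCStarModule.inner_op_smul_right OldCStarModule.inner_smul_right_complex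

lemma inner_add_left {x y z : E} : inner A (x + y) z = inner A x z + inner A y z := by
  rw [← star_star (r := inner A (x + y) z)]
  simp only [inner_add_right, star_add, star_inner]

lemma inner_op_smul_left {a : A} {x y : E} : inner A (x <• a) y = star a * inner A x y := by
  rw [← star_inner]; simp

lemma inner_smul_left_complex {z : ℂ} {x y : E} : inner A (z • x) y = star z • inner A x y := by
  rw [← star_inner]; simp

/-- The inner product as an additive map in the second variable. -/
noncomputable def innerR (x : E) : E →+ A :=
  AddMonoidHom.mk' (fun y => inner A x y) fun _ _ => inner_add_right

/-- The inner product as an additive map in the first variable. -/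
noncomputable def innerL (y : E) : E →+ A :=
  AddMonoidHom.mk' (fun x => inner A x y) fun _ _ => inner_add_left

lemma inner_sum_right {ι : Type*} {s : Finset ι} {x : E} {y : ι → E} :
    inner A x (∑ i ∈ s, y i) = ∑ i ∈ s, inner A x (y i) :=
  map_sum (innerR x) y s

lemma inner_sum_left {ι : Type*} {s : Finset ι} {x : ι → E} {y : E} :
    inner A (∑ i ∈ s, x i) y = ∑ i ∈ s, inner A (x i) y :=
  map_sum (innerL y) x s

lemma inner_sub_right' {x y z : E} : inner A x (y - z) = inner A x y - inner A x z :=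
  map_sub (innerR x) y z

lemma inner_sub_left' {x y z : E} : inner A (x - y) z = inner A x z - inner A y z :=
  map_sub (innerL z) x y

lemma norm_sq_eq {x : E} : ‖x‖ ^ 2 = ‖(inner A x x : A)‖ := by
  rw [norm_eq_sqrt_norm_inner_self (A := A), Real.sq_sqrt (norm_nonneg _)]

lemma inner_mul_inner_swap_le {x y : E} :
    (inner A y x : A) * inner A x y ≤ ‖x‖ ^ 2 • (inner A y y : A) := by
  rcases eq_or_ne x 0 with h | h
  · have : (inner A y x : A) = 0 := by rw [h]; exact map_zero (innerR y)
    rw [this, zero_mul]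
    exact smul_nonneg (by positivity) inner_self_nonneg
  have hpos : 0 < ‖x‖ ^ 2 := by
    rw [norm_sq_eq (A := A)]
    exact norm_pos_iff.2 fun H => h (inner_self.1 H)
  set r : ℝ := ‖x‖ ^ 2 with hr
  set a : A := inner A x y with ha
  have hsa : star a = inner A y x := star_inner _ _
  have hc : ∀ b : A, ((r : ℂ)) • b = r • b := fun b => (RCLike.real_smul_eq_coe_smul (K := ℂ) r b).symm
  have h0 : (0 : A) ≤ inner A (x <• a - (r : ℂ) • y) (x <• a - (r : ℂ) • y) := inner_self_nonneg
  simp only [inner_sub_left', inner_sub_right', inner_op_smul_left, inner_op_smul_right,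
    inner_smul_left_complex, inner_smul_right_complex, Complex.star_def, Complex.conj_ofReal,
    hc, hsa] at h0
  have hle : star a * inner A x x * a ≤ r • (star a * a) := by
    have := CStarAlgebra.star_left_conjugate_le_norm_smul (a := a) (b := (inner A x x : A))
      (star_inner x x)
    rwa [← norm_sq_eq (A := A)] at this
  rw [hsa] at hle
  rw [← ha] at h0
  have key : r • ((inner A y x : A) * a) ≤ r • (r • (inner A y y : A)) := by
    refine sub_nonneg.1 ?_
    have e : r • (r • (inner A y y : A)) - r • ((inner A y x : A) * a)
        = ((inner A y x * inner A x x - r • inner A y x) * a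
            - r • (inner A y x * a - r • inner A y y))
          + (r • ((inner A y x : A) * a) - inner A y x * inner A x x * a) := by
      rw [sub_mul, smul_mul_assoc, smul_sub]
      abel
    rw [e]
    exact add_nonneg h0 (sub_nonneg.2 hle)
  exact (smul_le_smul_iff_of_pos_left hpos).1 key

end helpers

end OldCStarModule

open OldCStarModule Finset

theorem stmt_10 {A E : Type*} [NonUnitalCStarAlgebra A] [PartialOrder A] [StarOrderedRing A]
    [AddCommGroup E] [Module ℂ E] [SMul Aᵐᵒᵖ E] [Norm E] [OldCStarModule A E]
    {n : ℕ} (hn : 0 < n) (x : E) (y : Fin n → E) :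
    (∑ i, star (inner A (y i) x : A) * (inner A (y i) x : A)) *
        (∑ i, star (inner A (y i) x : A) * (inner A (y i) x : A)) ≤
      ((∑ i, ‖(inner A (y i) x : A)‖ ^ 2) *
        ((Finset.univ.sup' ⟨⟨0, hn⟩, Finset.mem_univ _⟩ fun i => ‖y i‖ ^ 2) +
          Real.sqrt (∑ i, ∑ j, if i = j then 0 else ‖(inner A (y i) (y j) : A)‖ ^ 2))) •
        (inner A x x : A) := by
  classical
  let a : Fin n → A := fun i => inner A (y i) x
  let z : E := ∑ i, (y i) <• (a i)
  let S : A := ∑ i, star (a i) * a i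
  let Sa : ℝ := ∑ i, ‖a i‖ ^ 2
  let M : ℝ := Finset.univ.sup' ⟨⟨0, hn⟩, Finset.mem_univ _⟩ fun i => ‖y i‖ ^ 2
  let T : ℝ := ∑ i, ∑ j, if i = j then 0 else ‖(inner A (y i) (y j) : A)‖ ^ 2
  show S * S ≤ (Sa * (M + Real.sqrt T)) • (inner A x x : A)
  have hSa : 0 ≤ Sa := Finset.sum_nonneg fun i _ => sq_nonneg _
  -- Step 1 : Cauchy–Schwarz in the Hilbert module
  have h1 : (inner A x z : A) = S := by
    simp [z, inner_sum_right, S, a]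
  have h2 : (inner A z x : A) = S := by
    rw [← star_inner, h1]
    simp [S, star_sum, mul_comm]
  have key : S * S ≤ ‖z‖ ^ 2 • (inner A x x : A) := by
    calc S * S = (inner A x z : A) * inner A z x := by rw [h1, h2]
      _ ≤ ‖z‖ ^ 2 • (inner A x x : A) := inner_mul_inner_swap_le
  -- Step 2 : bound ‖z‖²
  have hzz : (inner A z z : A)
      = ∑ i, ∑ j, star (a i) * (inner A (y i) (y j) : A) * a j := by
    simp only [z, inner_sum_left, inner_sum_right, inner_op_smul_left,
      inner_op_smul_right, Finset.sum_mul, mul_assoc]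
    rw [Finset.sum_comm]
  let D : A := ∑ i, star (a i) * (inner A (y i) (y i) : A) * a i
  let O : A := ∑ i, ∑ j,
      if i = j then 0 else star (a i) * (inner A (y i) (y j) : A) * a j
  have hsplit : (inner A z z : A) = D + O := by
    show (inner A z z : A) = (∑ i, star (a i) * (inner A (y i) (y i) : A) * a i)
      + ∑ i, ∑ j, (if i = j then 0 else star (a i) * (inner A (y i) (y j) : A) * a j)
    rw [hzz, ← Finset.sum_add_distrib]
    refine Finset.sum_congr rfl fun i _ => ?_
    have : ∀ j, star (a i) * (inner A (y i) (y j) : A) * a j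
        = (if i = j then star (a i) * (inner A (y i) (y j) : A) * a j else 0)
          + (if i = j then 0 else star (a i) * (inner A (y i) (y j) : A) * a j) := by
      intro j; split <;> simp
    rw [Finset.sum_congr rfl fun j _ => this j, Finset.sum_add_distrib,
      Finset.sum_ite_eq]
    simp
  have hD : ‖D‖ ≤ Sa * M := by
    calc ‖D‖ ≤ ∑ i, ‖star (a i) * (inner A (y i) (y i) : A) * a i‖ := norm_sum_le _ _
      _ ≤ ∑ i, ‖a i‖ ^ 2 * M := by
          refine Finset.sum_le_sum fun i _ => ?_
          calc ‖star (a i) * (inner A (y i) (y i) : A) * a i‖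
              ≤ ‖star (a i) * (inner A (y i) (y i) : A)‖ * ‖a i‖ := norm_mul_le _ _
            _ ≤ ‖star (a i)‖ * ‖(inner A (y i) (y i) : A)‖ * ‖a i‖ := by
                gcongr; exact norm_mul_le _ _
            _ = ‖a i‖ ^ 2 * ‖y i‖ ^ 2 := by
                rw [norm_star, ← norm_sq_eq]; ring
            _ ≤ ‖a i‖ ^ 2 * M := by
                gcongr
                exact Finset.le_sup' (fun i => ‖y i‖ ^ 2) (Finset.mem_univ i)
      _ = Sa * M := by rw [← Finset.sum_mul]
  have hO : ‖O‖ ≤ Sa * Real.sqrt T := by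
    have step1 : ‖O‖ ≤ ∑ i, ∑ j,
        if i = j then 0 else (‖a i‖ * ‖a j‖) * ‖(inner A (y i) (y j) : A)‖ := by
      calc ‖O‖ ≤ ∑ i, ‖∑ j, if i = j then 0
              else star (a i) * (inner A (y i) (y j) : A) * a j‖ := norm_sum_le _ _
        _ ≤ ∑ i, ∑ j, ‖if i = j then (0:A)
              else star (a i) * (inner A (y i) (y j) : A) * a j‖ :=
            Finset.sum_le_sum fun i _ => norm_sum_le _ _
        _ ≤ _ := by
            refine Finset.sum_le_sum fun i _ => Finset.sum_le_sum fun j _ => ?_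
            split
            · simp
            · calc ‖star (a i) * (inner A (y i) (y j) : A) * a j‖
                  ≤ ‖star (a i) * (inner A (y i) (y j) : A)‖ * ‖a j‖ := norm_mul_le _ _
                _ ≤ ‖star (a i)‖ * ‖(inner A (y i) (y j) : A)‖ * ‖a j‖ := by
                    gcongr; exact norm_mul_le _ _
                _ = (‖a i‖ * ‖a j‖) * ‖(inner A (y i) (y j) : A)‖ := by
                    rw [norm_star]; ring
    -- Cauchy–Schwarz over pairs
    let f : Fin n × Fin n → ℝ := fun p => if p.1 = p.2 then 0 else ‖a p.1‖ * ‖a p.2‖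
    let g : Fin n × Fin n → ℝ := fun p =>
      if p.1 = p.2 then 0 else ‖(inner A (y p.1) (y p.2) : A)‖
    have hfg : (∑ i, ∑ j, if i = j then 0
        else (‖a i‖ * ‖a j‖) * ‖(inner A (y i) (y j) : A)‖)
        = ∑ p ∈ Finset.univ ×ˢ Finset.univ, f p * g p := by
      rw [Finset.sum_product]
      refine Finset.sum_congr rfl fun i _ => Finset.sum_congr rfl fun j _ => ?_
      simp only [f, g]
      split <;> simp
    have hcs := Real.sum_mul_le_sqrt_mul_sqrt (Finset.univ ×ˢ Finset.univ) f g
    have hf2 : (∑ p ∈ Finset.univ ×ˢ Finset.univ, f p ^ 2) ≤ Sa ^ 2 := by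
      have : Sa ^ 2 = ∑ p ∈ Finset.univ ×ˢ Finset.univ, ‖a p.1‖ ^ 2 * ‖a p.2‖ ^ 2 := by
        rw [sq, Finset.sum_mul_sum, Finset.sum_product]
      rw [this]
      refine Finset.sum_le_sum fun p _ => ?_
      simp only [f]
      split
      · simpa using mul_nonneg (sq_nonneg ‖a p.1‖) (sq_nonneg ‖a p.2‖)
      · rw [mul_pow]
    have hg2 : (∑ p ∈ Finset.univ ×ˢ Finset.univ, g p ^ 2) = T := by
      rw [Finset.sum_product]
      refine Finset.sum_congr rfl fun i _ => Finset.sum_congr rfl fun j _ => ?_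
      simp only [g]
      split
      all_goals simp
    have hfsqrt : Real.sqrt (∑ p ∈ Finset.univ ×ˢ Finset.univ, f p ^ 2) ≤ Sa := by
      calc Real.sqrt (∑ p ∈ Finset.univ ×ˢ Finset.univ, f p ^ 2)
          ≤ Real.sqrt (Sa ^ 2) := Real.sqrt_le_sqrt hf2
        _ = Sa := Real.sqrt_sq hSa
    calc ‖O‖ ≤ ∑ p ∈ Finset.univ ×ˢ Finset.univ, f p * g p := by rw [← hfg]; exact step1
      _ ≤ Real.sqrt (∑ p ∈ Finset.univ ×ˢ Finset.univ, f p ^ 2) *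
            Real.sqrt (∑ p ∈ Finset.univ ×ˢ Finset.univ, g p ^ 2) := hcs
      _ ≤ Sa * Real.sqrt T := by
          rw [hg2]; exact mul_le_mul_of_nonneg_right hfsqrt (Real.sqrt_nonneg _)
  have hz2 : ‖z‖ ^ 2 ≤ Sa * (M + Real.sqrt T) := by
    calc ‖z‖ ^ 2 = ‖(inner A z z : A)‖ := norm_sq_eq
      _ = ‖D + O‖ := by rw [hsplit]
      _ ≤ ‖D‖ + ‖O‖ := norm_add_le _ _
      _ ≤ Sa * M + Sa * Real.sqrt T := add_le_add hD hO
      _ = Sa * (M + Real.sqrt T) := by ring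
  exact key.trans (smul_le_smul_of_nonneg_right hz2 inner_self_nonneg)
end

section
/- In a C*-algebra A, for every element c, the self-adjoint element Re(c) = (c + c*)/2 satisfies |Re(c)| ≤ ((c*c + cc*)/2)^{1/2} in the order of A, where |x| = (x*x)^{1/2}. -/
open scoped NNReal ENNReal

section SpectralRadius

variable {𝕜 B : Type*} [NormedField 𝕜] [NormedRing B] [NormedAlgebra 𝕜 B] [CompleteSpace B]

lemma my_iSup_nnnorm_diff_zero (S : Set 𝕜) :
    ⨆ k ∈ S, (‖k‖₊ : ℝ≥0∞) = ⨆ k ∈ S \ {0}, (‖k‖₊ : ℝ≥0∞) := by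
  refine le_antisymm (iSup₂_le fun k hk => ?_) (iSup₂_le fun k hk => le_iSup₂_of_le k hk.1 le_rfl)
  rcases eq_or_ne k 0 with rfl | h
  · simp
  · exact le_iSup₂_of_le k ⟨hk, h⟩ le_rfl

lemma my_spectralRadius_mul_comm (a b : B) :
    spectralRadius 𝕜 (a * b) = spectralRadius 𝕜 (b * a) := by
  unfold spectralRadius
  rw [my_iSup_nnnorm_diff_zero (spectrum 𝕜 (a * b)),
    my_iSup_nnnorm_diff_zero (spectrum 𝕜 (b * a)), spectrum.nonzero_mul_comm]

end SpectralRadius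

section SqrtMono

variable {A : Type*} [CStarAlgebra A] [PartialOrder A] [StarOrderedRing A]

open CFC

lemma my_sqrt_le_sqrt_of_isUnit {a b : A} (ha : 0 ≤ a) (hb : 0 ≤ b) (hbu : IsUnit b)
    (hab : a ≤ b) : sqrt a ≤ sqrt b := by
  nontriviality A
  have hsa : (0 : A) ≤ sqrt a := sqrt_nonneg _
  have hsb : (0 : A) ≤ sqrt b := sqrt_nonneg _
  have hb0 : 0 ∉ spectrum ℝ≥0 b := spectrum.zero_notMem ℝ≥0 hbu
  have hsbu : IsUnit (sqrt b) := by
    rw [sqrt_eq_cfc, isUnit_cfc_iff NNReal.sqrt b (by fun_prop) hb]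
    intro x hx
    simp only [ne_eq, NNReal.sqrt_eq_zero]
    exact fun hx0 => hb0 (hx0 ▸ hx)
  have h1 : ‖sqrt a * b ^ (-(1 / 2) : ℝ)‖ ≤ 1 := (le_iff_norm_sqrt_mul_rpow _ _ ha (hbu.isStrictlyPositive hb)).mp hab
  rw [le_iff_norm_sqrt_mul_rpow _ _ hsa (hsbu.isStrictlyPositive hsb)]
  set x := sqrt (sqrt a) with hx_def
  set y := (sqrt b) ^ (-(1 / 2) : ℝ) with hy_def
  have hx : (0 : A) ≤ x := sqrt_nonneg _
  have hy : (0 : A) ≤ y := rpow_nonneg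
  set w := b ^ (-(1 / 2) : ℝ) with hw_def
  have hw : (0 : A) ≤ w := rpow_nonneg
  have hyy : y * y = w := by
    rw [hy_def, ← rpow_add hsbu, hw_def,
      rpow_sqrt b _ hbu hb]
    norm_num
  have hxx : x * x = sqrt a := sqrt_mul_sqrt_self _ (sqrt_nonneg _)
  rw [← sq_le_one_iff₀ (norm_nonneg _), sq, ← CStarRing.norm_self_mul_star, star_mul,
    (IsSelfAdjoint.of_nonneg hx).star_eq, (IsSelfAdjoint.of_nonneg hy).star_eq]
  have hassoc : x * y * (y * x) = x * w * x := by
    rw [← hyy]; noncomm_ring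
  rw [hassoc]
  have hz : (0 : A) ≤ x * w * x := by
    simpa [(IsSelfAdjoint.of_nonneg hx).star_eq] using star_right_conjugate_nonneg hw x
  have hrad : (‖x * w * x‖₊ : ℝ≥0∞) ≤ ‖sqrt a * w‖₊ := by
    calc (‖x * w * x‖₊ : ℝ≥0∞) = spectralRadius ℂ (x * w * x) :=
          (IsSelfAdjoint.of_nonneg hz).spectralRadius_eq_nnnorm.symm
      _ = spectralRadius ℂ (x * (x * w)) := by
          rw [show x * w * x = (x * w) * x from rfl, my_spectralRadius_mul_comm]
      _ = spectralRadius ℂ (sqrt a * w) := by rw [← mul_assoc, hxx]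
      _ ≤ ‖sqrt a * w‖₊ := spectrum.spectralRadius_le_nnnorm (𝕜 := ℂ) _
  have : ‖x * w * x‖ ≤ ‖sqrt a * w‖ := by exact_mod_cast hrad
  exact this.trans h1

lemma my_sqrt_le_sqrt {a b : A} (ha : 0 ≤ a) (hab : a ≤ b) : sqrt a ≤ sqrt b := by
  have hb : 0 ≤ b := ha.trans hab
  have key : ∀ ε : ℝ≥0, 0 < ε →
      sqrt a ≤ sqrt b + algebraMap ℝ≥0 A (NNReal.sqrt ε) := by
    intro ε hε
    have hmap' : ∀ δ : ℝ≥0, (0 : A) ≤ algebraMap ℝ≥0 A δ := by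
      intro δ
      have : algebraMap ℝ≥0 A δ
          = star (algebraMap ℝ≥0 A (NNReal.sqrt δ)) * algebraMap ℝ≥0 A (NNReal.sqrt δ) := by
        have : star (algebraMap ℝ≥0 A (NNReal.sqrt δ)) = algebraMap ℝ≥0 A (NNReal.sqrt δ) := by
          exact (IsSelfAdjoint.algebraMap A (r := NNReal.sqrt δ) (by rfl)).star_eq
        rw [this, ← map_mul, NNReal.mul_self_sqrt]
      rw [this]
      exact star_mul_self_nonneg _
    have hmap : (0 : A) ≤ algebraMap ℝ≥0 A ε := hmap' ε
    have h1 : b ≤ b + algebraMap ℝ≥0 A ε := le_add_of_nonneg_right hmap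
    have hbu : IsUnit (b + algebraMap ℝ≥0 A ε) := by
      refine CStarAlgebra.isUnit_of_le _ ?_ ((IsUnit.map (algebraMap ℝ≥0 A) (isUnit_iff_ne_zero.mpr hε.ne')).isStrictlyPositive hmap)
      exact le_add_of_nonneg_left hb
    have h2 : sqrt a ≤ sqrt (b + algebraMap ℝ≥0 A ε) :=
      my_sqrt_le_sqrt_of_isUnit ha (hb.trans h1) hbu (hab.trans h1)
    refine h2.trans ?_
    have e1 : b + algebraMap ℝ≥0 A ε = cfc (fun t : ℝ≥0 => t + ε) b := by
      rw [cfc_add b _ _, cfc_id' ℝ≥0 b, cfc_const ε b]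
    have e2 : sqrt (b + algebraMap ℝ≥0 A ε) = cfc (fun t : ℝ≥0 => NNReal.sqrt (t + ε)) b := by
      rw [e1, sqrt_eq_cfc, ← cfc_comp' NNReal.sqrt (fun t : ℝ≥0 => t + ε) b]
    have e3 : sqrt b + algebraMap ℝ≥0 A (NNReal.sqrt ε)
        = cfc (fun t : ℝ≥0 => NNReal.sqrt t + NNReal.sqrt ε) b := by
      rw [cfc_add b _ _, cfc_const (NNReal.sqrt ε) b, sqrt_eq_cfc]
    rw [e2, e3]
    refine cfc_mono fun t ht => ?_
    have : t + ε ≤ (NNReal.sqrt t + NNReal.sqrt ε) ^ 2 := by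
      rw [add_sq, NNReal.sq_sqrt, NNReal.sq_sqrt]
      exact add_le_add_left (le_add_of_nonneg_right zero_le) ε
    simpa [NNReal.sqrt_sq] using NNReal.sqrt_le_sqrt.mpr this
  have hlim : Filter.Tendsto
      (fun n : ℕ => sqrt b + algebraMap ℝ≥0 A (NNReal.sqrt (((n : ℝ≥0) + 1)⁻¹)))
      Filter.atTop (nhds (sqrt b)) := by
    have h0 : Filter.Tendsto (fun n : ℕ => NNReal.sqrt (((n : ℝ≥0) + 1)⁻¹))
        Filter.atTop (nhds 0) := by
      have : Filter.Tendsto (fun n : ℕ => ((n : ℝ≥0) + 1)⁻¹) Filter.atTop (nhds 0) := by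
        rw [← NNReal.tendsto_coe]
        simpa [one_div] using tendsto_one_div_add_atTop_nhds_zero_nat (𝕜 := ℝ)
      simpa [Function.comp_def] using (NNReal.continuous_sqrt.tendsto 0).comp this
    have := ((continuous_algebraMap ℝ≥0 A).tendsto 0).comp h0
    simpa using Filter.Tendsto.const_add (sqrt b) this
  refine ge_of_tendsto' hlim fun n => key _ (by positivity)

end SqrtMono

theorem stmt_11 {A : Type*} [CStarAlgebra A] [PartialOrder A] [StarOrderedRing A] (c : A) :
    CFC.sqrt (star ((1 / 2 : ℝ) • (c + star c)) * ((1 / 2 : ℝ) • (c + star c))) ≤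
      CFC.sqrt ((1 / 2 : ℝ) • (star c * c + c * star c)) := by
  set s := (1 / 2 : ℝ) • (c + star c) with hs
  set e := (1 / 2 : ℝ) • (c - star c) with he
  have hid : (1 / 2 : ℝ) • (star c * c + c * star c) = star s * s + star e * e := by
    simp only [hs, he, star_smul, star_add, star_sub, star_star, star_trivial,
      smul_mul_smul_comm, mul_add, add_mul, sub_mul, mul_sub, smul_add, smul_sub]
    module
  rw [hid]
  exact my_sqrt_le_sqrt (star_mul_self_nonneg s) (le_add_of_nonneg_right (star_mul_self_nonneg e))
end
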